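/- Let σ ∈ (0,1) be real and let K ≤ k be nonnegative integers. Then ∑_{t=K}^{k} σ^{k−t}/(t+1) ≤ σ^{⌈k/2⌉}/(1−σ) + 2/((1−σ)·(k+1)). -/

import Mathlib

lemma geo_aux (σ : ℝ) (hσ0 : 0 ≤ σ) (hσ1 : σ < 1) (n : ℕ) :
    ∑ i ∈ Finset.range n, σ ^ i ≤ 1 / (1 - σ) := by
  have h1σ : 0 < 1 - σ := by linarith
  rw [geom_sum_eq hσ1.ne,
    show (σ ^ n - 1) / (σ - 1) = (1 - σ ^ n) / (1 - σ) from by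
      rw [← neg_div_neg_eq, neg_sub, neg_sub]]
  have hpow : 0 ≤ σ ^ n := pow_nonneg hσ0 n
  gcongr
  linarith

lemma ceil_half (k : ℕ) : ⌈(k : ℝ) / 2⌉₊ = k - k / 2 := by
  rcases Nat.even_or_odd k with ⟨n, rfl⟩ | ⟨n, rfl⟩
  · have h : ((n + n : ℕ) : ℝ) / 2 = (n : ℕ) := by push_cast; ring
    rw [h, Nat.ceil_natCast]
    omega
  · have h : ((2 * n + 1 : ℕ) : ℝ) / 2 = 1 / 2 + (n : ℕ) := by push_cast; ring
    rw [h, Nat.ceil_add_natCast (by norm_num)]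
    have h2 : ⌈(1 / 2 : ℝ)⌉₊ = 1 := by
      rw [Nat.ceil_eq_iff (by norm_num)]; norm_num
    rw [h2]; omega

/-- For `σ ∈ (0,1)` and nonnegative integers `K ≤ k`,
`∑_{t=K}^{k} σ^(k−t)/(t+1) ≤ σ^⌈k/2⌉/(1−σ) + 2/((1−σ)·(k+1))`. -/
theorem stmt_11 (σ : ℝ) (hσ0 : 0 < σ) (hσ1 : σ < 1) (K k : ℕ) (hKk : K ≤ k) :
    (∑ t ∈ Finset.Icc K k, σ ^ (k - t) / ((t : ℝ) + 1)) ≤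
      σ ^ (⌈(k : ℝ) / 2⌉₊) / (1 - σ) + 2 / ((1 - σ) * ((k : ℝ) + 1)) := by
  have h1σ : 0 < 1 - σ := by linarith
  set m := k / 2 with hm
  have hmk : m ≤ k := Nat.div_le_self k 2
  have hceil : ⌈(k : ℝ) / 2⌉₊ = k - m := ceil_half k
  have hnn : ∀ t : ℕ, 0 ≤ σ ^ (k - t) / ((t : ℝ) + 1) := fun t =>
    div_nonneg (pow_nonneg hσ0.le _) (by positivity)
  have hstep1 : (∑ t ∈ Finset.Icc K k, σ ^ (k - t) / ((t : ℝ) + 1)) ≤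
      ∑ t ∈ Finset.Icc 0 k, σ ^ (k - t) / ((t : ℝ) + 1) := by
    apply Finset.sum_le_sum_of_subset_of_nonneg
    · intro x hx; simp only [Finset.mem_Icc] at *; omega
    · intro i _ _; exact hnn i
  have hIcc : Finset.Icc 0 k = Finset.Ico 0 (k + 1) := by
    rw [Finset.Ico_add_one_right_eq_Icc]
  have hsplit : ∑ t ∈ Finset.Icc 0 k, σ ^ (k - t) / ((t : ℝ) + 1) =
      (∑ t ∈ Finset.Ico 0 (m + 1), σ ^ (k - t) / ((t : ℝ) + 1)) +
      ∑ t ∈ Finset.Ico (m + 1) (k + 1), σ ^ (k - t) / ((t : ℝ) + 1) := by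
    rw [hIcc]
    exact (Finset.sum_Ico_consecutive _ (Nat.zero_le (m + 1)) (by omega)).symm
  -- Part A
  have hA : (∑ t ∈ Finset.Ico 0 (m + 1), σ ^ (k - t) / ((t : ℝ) + 1)) ≤
      σ ^ (k - m) / (1 - σ) := by
    have h1 : (∑ t ∈ Finset.Ico 0 (m + 1), σ ^ (k - t) / ((t : ℝ) + 1)) ≤
        ∑ t ∈ Finset.Ico 0 (m + 1), σ ^ (k - m) * σ ^ (m - t) := by
      apply Finset.sum_le_sum
      intro t ht
      simp only [Finset.mem_Ico] at ht
      have htm : t ≤ m := by omega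
      have hpe : σ ^ (k - t) = σ ^ (k - m) * σ ^ (m - t) := by
        rw [← pow_add]; congr 1; omega
      rw [hpe, div_le_iff₀ (by positivity)]
      nlinarith [mul_nonneg (pow_nonneg hσ0.le (k - m)) (pow_nonneg hσ0.le (m - t)),
        Nat.cast_nonneg (α := ℝ) t]
    have h2 : ∑ t ∈ Finset.Ico 0 (m + 1), σ ^ (k - m) * σ ^ (m - t) =
        σ ^ (k - m) * ∑ t ∈ Finset.range (m + 1), σ ^ (m - t) := by
      rw [← Finset.mul_sum, Finset.range_eq_Ico]
    have h3 : ∑ t ∈ Finset.range (m + 1), σ ^ (m - t) =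
        ∑ t ∈ Finset.range (m + 1), σ ^ t := by
      rw [← Finset.sum_range_reflect (fun i => σ ^ i) (m + 1)]
      apply Finset.sum_congr rfl
      intro i hi
      simp only [Finset.mem_range] at hi
      congr 1 <;> omega
    calc _ ≤ σ ^ (k - m) * ∑ t ∈ Finset.range (m + 1), σ ^ t := by
            rw [← h3, ← h2]; exact h1
      _ ≤ σ ^ (k - m) * (1 / (1 - σ)) :=
            mul_le_mul_of_nonneg_left (geo_aux σ hσ0.le hσ1 _) (pow_nonneg hσ0.le _)
      _ = σ ^ (k - m) / (1 - σ) := by ring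
  -- Part B
  have hB : (∑ t ∈ Finset.Ico (m + 1) (k + 1), σ ^ (k - t) / ((t : ℝ) + 1)) ≤
      2 / ((1 - σ) * ((k : ℝ) + 1)) := by
    have hk1 : (0 : ℝ) < (k : ℝ) + 1 := by positivity
    have h1 : (∑ t ∈ Finset.Ico (m + 1) (k + 1), σ ^ (k - t) / ((t : ℝ) + 1)) ≤
        ∑ t ∈ Finset.Ico (m + 1) (k + 1), σ ^ (k - t) * (2 / ((k : ℝ) + 1)) := by
      apply Finset.sum_le_sum
      intro t ht
      simp only [Finset.mem_Ico] at ht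
      have h2t : (k : ℝ) + 1 ≤ 2 * ((t : ℝ) + 1) := by
        have : k + 1 ≤ 2 * (t + 1) := by omega
        exact_mod_cast this
      rw [div_le_iff₀ (by positivity), mul_comm (σ ^ (k - t)) _, mul_assoc,
        div_mul_eq_mul_div, le_div_iff₀ hk1]
      nlinarith [pow_nonneg hσ0.le (k - t)]
    have h2 : ∑ t ∈ Finset.Ico (m + 1) (k + 1), σ ^ (k - t) ≤ 1 / (1 - σ) := by
      rw [Finset.sum_Ico_eq_sum_range]
      have hre : ∀ i ∈ Finset.range (k + 1 - (m + 1)),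
          σ ^ (k - (m + 1 + i)) = σ ^ (k - m - 1 - i) := by
        intro i hi; congr 1; omega
      rw [Finset.sum_congr rfl hre]
      have heq : ∑ i ∈ Finset.range (k + 1 - (m + 1)), σ ^ (k - m - 1 - i) ≤
          ∑ i ∈ Finset.range (k - m), σ ^ i := by
        rw [show k + 1 - (m + 1) = k - m from by omega,
          ← Finset.sum_range_reflect (fun i => σ ^ i) (k - m)]
      exact heq.trans (geo_aux σ hσ0.le hσ1 _)
    calc _ ≤ ∑ t ∈ Finset.Ico (m + 1) (k + 1), σ ^ (k - t) * (2 / ((k : ℝ) + 1)) := h1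
      _ = (∑ t ∈ Finset.Ico (m + 1) (k + 1), σ ^ (k - t)) * (2 / ((k : ℝ) + 1)) :=
            (Finset.sum_mul _ _ _).symm
      _ ≤ (1 / (1 - σ)) * (2 / ((k : ℝ) + 1)) :=
            mul_le_mul_of_nonneg_right h2 (by positivity)
      _ = 2 / ((1 - σ) * ((k : ℝ) + 1)) := by
            rw [div_mul_div_comm, one_mul]
  rw [hceil]
  calc _ ≤ ∑ t ∈ Finset.Icc 0 k, σ ^ (k - t) / ((t : ℝ) + 1) := hstep1
    _ = _ := hsplit
    _ ≤ σ ^ (k - m) / (1 - σ) + 2 / ((1 - σ) * ((k : ℝ) + 1)) := add_le_add hA hB
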